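/- Let Π be a profinite group, N ⊆ Π an open normal subgroup with |Π/N| = d, ℓ > d a prime, and T a finitely generated free ℤ_ℓ-module with a continuous Π-action. If (T/ℓT)^N = (T/ℓT)^Π, then (T/ℓⁿT)^N = (T/ℓⁿT)^Π for every integer n ≥ 1. -/

import Mathlib

/-- Let `Γ` be a profinite group, `N ⊆ Γ` an open normal subgroup with
`|Γ/N| = d`, `ℓ > d` a prime, and `T = ℤ_ℓ^r` a finitely generated free `ℤ_ℓ`-module with a
continuous `Γ`-action `ρ`. If `(T/ℓT)^N = (T/ℓT)^Γ`, then `(T/ℓⁿT)^N = (T/ℓⁿT)^Γ` for every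
`n ≥ 1`. (The invariance of the class of `x` in `T/ℓⁿT` under `g` is expressed,
quotient-freely, as `ρ g x - x ∈ ℓⁿT`.) -/
theorem invariants_mod_elln_eq_of_invariants_mod_ell
    (ℓ d r : ℕ) [Fact ℓ.Prime] (hℓd : d < ℓ)
    (Γ : Type*) [Group Γ] [TopologicalSpace Γ] [IsTopologicalGroup Γ]
    [CompactSpace Γ] [TotallyDisconnectedSpace Γ]
    (N : Subgroup Γ) [N.Normal] (hNopen : IsOpen (N : Set Γ)) (hNd : N.index = d)
    (ρ : Representation ℤ_[ℓ] Γ (Fin r → ℤ_[ℓ]))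
    (hcont : Continuous fun p : Γ × (Fin r → ℤ_[ℓ]) => ρ p.1 p.2)
    (h1 : ∀ x : Fin r → ℤ_[ℓ],
      (∀ g ∈ N, ∃ y, ρ g x - x = (ℓ : ℤ_[ℓ]) • y) →
      ∀ g : Γ, ∃ y, ρ g x - x = (ℓ : ℤ_[ℓ]) • y) :
    ∀ n : ℕ, 1 ≤ n → ∀ x : Fin r → ℤ_[ℓ],
      (∀ g ∈ N, ∃ y, ρ g x - x = ((ℓ : ℤ_[ℓ]) ^ n) • y) →
      ∀ g : Γ, ∃ y, ρ g x - x = ((ℓ : ℤ_[ℓ]) ^ n) • y := by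
  have hℓp : ℓ.Prime := Fact.out
  have hℓ0 : (ℓ : ℤ_[ℓ]) ≠ 0 := Nat.cast_ne_zero.mpr hℓp.ne_zero
  -- the quotient Γ ⧸ N is finite, so d ≠ 0
  have hfin : Finite (Γ ⧸ N) := N.quotient_finite_of_isOpen hNopen
  have hd0 : d ≠ 0 := hNd ▸ Subgroup.index_ne_zero_of_finite
  -- d is a unit in ℤ_[ℓ]
  have hdunit : IsUnit (d : ℤ_[ℓ]) := by
    rw [PadicInt.isUnit_iff]
    have hle : ‖((d : ℤ) : ℤ_[ℓ])‖ ≤ 1 := PadicInt.norm_le_one _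
    have hnlt : ¬ ‖((d : ℤ) : ℤ_[ℓ])‖ < 1 := by
      rw [PadicInt.norm_int_lt_one_iff_dvd]
      intro hdvd
      have : ℓ ∣ d := Int.natCast_dvd_natCast.mp hdvd
      exact absurd (Nat.le_of_dvd (Nat.pos_of_ne_zero hd0) this) (not_le.mpr hℓd)
    have : ‖((d : ℤ) : ℤ_[ℓ])‖ = 1 := le_antisymm hle (not_lt.mp hnlt)
    simpa using this
  -- g ^ d ∈ N for all g
  have hpowN : ∀ g : Γ, g ^ d ∈ N := by
    intro g
    have : ((g : Γ ⧸ N)) ^ d = 1 := by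
      have := pow_card_eq_one' (G := Γ ⧸ N) (x := (g : Γ ⧸ N))
      rwa [show Nat.card (Γ ⧸ N) = d from hNd] at this
    rwa [← QuotientGroup.mk_pow, QuotientGroup.eq_one_iff] at this
  -- cancellation of ℓ^n
  have hcan : ∀ (m : ℕ) (v w : Fin r → ℤ_[ℓ]),
      (ℓ : ℤ_[ℓ]) ^ m • v = (ℓ : ℤ_[ℓ]) ^ m • w → v = w := by
    intro m v w h
    funext i
    have := congrFun h i
    simp only [Pi.smul_apply, smul_eq_mul] at this
    exact mul_left_cancel₀ (pow_ne_zero m hℓ0) this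
  intro n hn
  induction n with
  | zero => omega
  | succ n IH =>
    rcases Nat.eq_zero_or_pos n with rfl | hn1
    · intro x hx g
      simpa using h1 x (fun g hg => by simpa using hx g hg) g
    · intro x hx g
      -- by inductive hypothesis, ρ g x - x is divisible by ℓ^n for all g
      have hdiv : ∀ g : Γ, ∃ y, ρ g x - x = (ℓ : ℤ_[ℓ]) ^ n • y := by
        refine IH hn1 x (fun g hg => ?_)
        obtain ⟨y, hy⟩ := hx g hg
        exact ⟨(ℓ : ℤ_[ℓ]) • y, by rw [hy, smul_smul, ← pow_succ]⟩
      choose c hc using hdiv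
      -- cocycle identity
      have hcoc : ∀ g h : Γ, c (g * h) = ρ g (c h) + c g := by
        intro g h
        apply hcan n
        have key : ρ (g * h) x - x = ρ g (ρ h x - x) + (ρ g x - x) := by
          rw [map_mul]
          simp only [Module.End.mul_apply, map_sub]
          abel
        rw [← hc, key, hc, hc, map_smul, smul_add]
      -- c vanishes mod ℓ on N
      have hcN : ∀ g ∈ N, ∃ y, c g = (ℓ : ℤ_[ℓ]) • y := by
        intro g hg
        obtain ⟨y, hy⟩ := hx g hg
        refine ⟨y, hcan n _ _ ?_⟩
        rw [← hc, hy, pow_succ, mul_smul]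
      -- values of c are N-invariant mod ℓ
      have hA : ∀ g : Γ, ∀ m ∈ N, ∃ y, ρ m (c g) - c g = (ℓ : ℤ_[ℓ]) • y := by
        intro g m hm
        have hm' : g⁻¹ * m * g ∈ N := by
          have := Subgroup.Normal.conj_mem ‹N.Normal› m hm g⁻¹
          simpa using this
        obtain ⟨y1, hy1⟩ := hcN m hm
        obtain ⟨y2, hy2⟩ := hcN _ hm'
        have e1 : c (m * g) = ρ m (c g) + c m := hcoc m g
        have e2 : c (m * g) = ρ g (c (g⁻¹ * m * g)) + c g := by
          have : m * g = g * (g⁻¹ * m * g) := by group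
          rw [this, hcoc]
        refine ⟨ρ g y2 - y1, ?_⟩
        have : ρ m (c g) + c m = ρ g (c (g⁻¹ * m * g)) + c g := e1 ▸ e2 ▸ rfl
        rw [hy1, hy2, map_smul] at this
        rw [smul_sub]
        linear_combination (norm := module) this
      -- hence values of c are Γ-invariant mod ℓ
      have hB : ∀ g h : Γ, ∃ y, ρ h (c g) - c g = (ℓ : ℤ_[ℓ]) • y :=
        fun g => h1 (c g) (hA g)
      -- c 1 = 0
      have hc1 : c 1 = 0 := by
        apply hcan n
        rw [← hc, map_one, smul_zero]
        simp
      -- c (g ^ k) ≡ k • c g mod ℓ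
      have hpow : ∀ k : ℕ, ∃ y, c (g ^ k) = (k : ℤ_[ℓ]) • c g + (ℓ : ℤ_[ℓ]) • y := by
        intro k
        induction k with
        | zero => exact ⟨0, by simp [hc1]⟩
        | succ k ih =>
          obtain ⟨y, hy⟩ := ih
          obtain ⟨z, hz⟩ := hB (g ^ k) g
          refine ⟨y + z, ?_⟩
          have : c (g ^ (k + 1)) = ρ g (c (g ^ k)) + c g := by
            rw [pow_succ', hcoc]
          rw [this, show ρ g (c (g ^ k)) = c (g ^ k) + (ℓ : ℤ_[ℓ]) • z by
            linear_combination (norm := module) hz, hy]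
          push_cast
          module
      -- conclude: d • c g ∈ ℓ T, so c g ∈ ℓ T
      obtain ⟨y1, hy1⟩ := hpow d
      obtain ⟨y2, hy2⟩ := hcN _ (hpowN g)
      have hdc : (d : ℤ_[ℓ]) • c g = (ℓ : ℤ_[ℓ]) • (y2 - y1) := by
        rw [hy2] at hy1
        rw [smul_sub]
        linear_combination (norm := module) hy1.symm
      obtain ⟨u, hu⟩ := hdunit
      have hcg : c g = (ℓ : ℤ_[ℓ]) • ((↑u⁻¹ : ℤ_[ℓ]) • (y2 - y1)) := by
        calc c g = ((↑u⁻¹ : ℤ_[ℓ]) * (d : ℤ_[ℓ])) • c g := by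
              rw [← hu, Units.inv_mul, one_smul]
          _ = (↑u⁻¹ : ℤ_[ℓ]) • ((d : ℤ_[ℓ]) • c g) := by rw [mul_smul]
          _ = (ℓ : ℤ_[ℓ]) • ((↑u⁻¹ : ℤ_[ℓ]) • (y2 - y1)) := by
              rw [hdc, smul_comm]
      exact ⟨(↑u⁻¹ : ℤ_[ℓ]) • (y2 - y1), by
        rw [hc g, hcg, smul_smul, ← pow_succ]⟩
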